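/- Let c be an edge-coloring of a graph G, let u, v, w be three vertices, and suppose each x ∈ {u,v,w} has three internally disjoint rainbow paths P₁ˣ, P₂ˣ, P₃ˣ from x to a set D with pairwise disjoint color sets (i.e., P₁ˣ ∪ P₂ˣ ∪ P₃ˣ is rainbow), where each P₁ˣ has exactly one edge. Then there exist i, j, k ∈ {1,2,3} with P_iᵘ ∪ P_jᵛ ∪ P_kʷ rainbow if and only if either (C1) the colors c(P₁ᵘ), c(P₁ᵛ), c(P₁ʷ) are not all equal, or (C2) there exist distinct x, y ∈ {u,v,w} and s, t ∈ {2,3} with c(P_sˣ) ∩ c(P_tʸ) = ∅. -/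

import Mathlib

open SimpleGraph

lemma tripleNodup {α : Type*} (X Y Z : List α) :
    (X ++ Y ++ Z).Nodup ↔ X.Nodup ∧ Y.Nodup ∧ Z.Nodup ∧
      X.Disjoint Y ∧ X.Disjoint Z ∧ Y.Disjoint Z := by
  simp [List.nodup_append, List.disjoint_append_left]
  simp only [List.Disjoint]
  intro hX
  constructor
  · rintro ⟨⟨hY, hZ, hYZ⟩, hXYZ⟩
    exact ⟨hY, hZ, fun a ha hb => hXYZ a ha a (Or.inl hb) rfl,
      fun a ha hb => hXYZ a ha a (Or.inr hb) rfl, fun a ha hb => hYZ a ha a hb rfl⟩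
  · rintro ⟨hY, hZ, h1, h2, h3⟩
    exact ⟨⟨hY, hZ, fun a ha b hb e => h3 ha (e ▸ hb)⟩,
      fun a ha b hb e => hb.elim (fun hb => h1 ha (e ▸ hb)) (fun hb => h2 ha (e ▸ hb))⟩

lemma pick3 {α : Type*} (C : Fin 3 → List α)
    (hd : ∀ i j : Fin 3, i ≠ j → (C i).Disjoint (C j)) (a b : α) :
    ∃ k, a ∉ C k ∧ b ∉ C k := by
  by_contra h
  push_neg at h
  have h' : ∀ k, a ∈ C k ∨ b ∈ C k := fun k => by
    by_cases ha : a ∈ C k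
    · exact Or.inl ha
    · exact Or.inr (h k ha)
  rcases h' 0 with h0|h0 <;> rcases h' 1 with h1|h1 <;> rcases h' 2 with h2|h2
  · exact hd 0 1 (by decide) h0 h1
  · exact hd 0 1 (by decide) h0 h1
  · exact hd 0 2 (by decide) h0 h2
  · exact hd 1 2 (by decide) h1 h2
  · exact hd 1 2 (by decide) h1 h2
  · exact hd 0 2 (by decide) h0 h2
  · exact hd 0 1 (by decide) h0 h1
  · exact hd 0 1 (by decide) h0 h1

lemma sysFacts {α : Type*} (A : Fin 3 → List α)
    (hA : (A 0 ++ A 1 ++ A 2).Nodup) :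
    (∀ i, (A i).Nodup) ∧ (∀ i j : Fin 3, i ≠ j → (A i).Disjoint (A j)) := by
  rw [tripleNodup] at hA
  obtain ⟨n0, n1, n2, d01, d02, d12⟩ := hA
  constructor
  · intro i; fin_cases i <;> assumption
  · intro i j hij
    fin_cases i <;> fin_cases j <;>
      first
      | exact absurd rfl hij
      | assumption
      | exact fun x hx hy => d01 hy hx
      | exact fun x hx hy => d02 hy hx
      | exact fun x hx hy => d12 hy hx

lemma keyLemma (A B C : Fin 3 → List ℕ) (a b d : ℕ)
    (hA0 : A 0 = [a]) (hB0 : B 0 = [b]) (hC0 : C 0 = [d])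
    (hA : (A 0 ++ A 1 ++ A 2).Nodup) (hB : (B 0 ++ B 1 ++ B 2).Nodup)
    (hC : (C 0 ++ C 1 ++ C 2).Nodup) :
    (∃ i j k : Fin 3, (A i ++ B j ++ C k).Nodup) ↔
      (¬ (A 0 = B 0 ∧ B 0 = C 0)) ∨
      (∃ s t : Fin 3, s ≠ 0 ∧ t ≠ 0 ∧
        ((A s).Disjoint (B t) ∨ (A s).Disjoint (C t) ∨ (B s).Disjoint (C t))) := by
  obtain ⟨hAn, hAp⟩ := sysFacts A hA
  obtain ⟨hBn, hBp⟩ := sysFacts B hB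
  obtain ⟨hCn, hCp⟩ := sysFacts C hC
  constructor
  · rintro ⟨i, j, k, h⟩
    rw [tripleNodup] at h
    obtain ⟨-, -, -, hab, hac, hbc⟩ := h
    by_contra hR
    push_neg at hR
    obtain ⟨⟨hAB, hBC⟩, hR2⟩ := hR
    have hij : i = 0 ∨ j = 0 := by
      by_contra hc; push_neg at hc; exact (hR2 i j hc.1 hc.2).1 hab
    have hik : i = 0 ∨ k = 0 := by
      by_contra hc; push_neg at hc; exact (hR2 i k hc.1 hc.2).2.1 hac
    have hjk : j = 0 ∨ k = 0 := by
      by_contra hc; push_neg at hc; exact (hR2 j k hc.1 hc.2).2.2 hbc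
    have h2 : (i = 0 ∧ j = 0) ∨ (i = 0 ∧ k = 0) ∨ (j = 0 ∧ k = 0) := by tauto
    rcases h2 with ⟨hi, hj⟩ | ⟨hi, hk⟩ | ⟨hj, hk⟩
    · subst hi; subst hj
      rw [hAB, hB0] at hab
      exact hab (show b ∈ [b] by simp) (show b ∈ [b] by simp)
    · subst hi; subst hk
      rw [hAB, hBC, hC0] at hac
      exact hac (show d ∈ [d] by simp) (show d ∈ [d] by simp)
    · subst hj; subst hk
      rw [hBC, hC0] at hbc
      exact hbc (show d ∈ [d] by simp) (show d ∈ [d] by simp)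
  · have case1 : A 0 ≠ B 0 ∨ B 0 ≠ C 0 → ∃ i j k : Fin 3, (A i ++ B j ++ C k).Nodup := by
      rintro (hne | hne)
      · have hab : a ≠ b := by
          intro h; apply hne; rw [hA0, hB0, h]
        obtain ⟨k, hk1, hk2⟩ := pick3 C hCp a b
        refine ⟨0, 0, k, ?_⟩
        rw [tripleNodup]
        refine ⟨by rw [hA0]; simp, by rw [hB0]; simp, hCn k, ?_, ?_, ?_⟩
        · rw [hA0, hB0]; simpa using hab.symm
        · rw [hA0]; simpa using hk1
        · rw [hB0]; simpa using hk2
      · have hbd : b ≠ d := by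
          intro h; apply hne; rw [hB0, hC0, h]
        obtain ⟨i, hi1, hi2⟩ := pick3 A hAp b d
        refine ⟨i, 0, 0, ?_⟩
        rw [tripleNodup]
        refine ⟨hAn i, by rw [hB0]; simp, by rw [hC0]; simp, ?_, ?_, ?_⟩
        · rw [hB0]; simpa using hi1
        · rw [hC0]; simpa using hi2
        · rw [hB0, hC0]; simpa using hbd.symm
    rintro (hne | ⟨s, t, hs, ht, hdisj⟩)
    · exact case1 (not_and_or.mp hne)
    · by_cases hC1 : A 0 = B 0 ∧ B 0 = C 0
      · obtain ⟨hAB, hBC⟩ := hC1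
        have hab : a = b := by simpa using (hA0.symm.trans (hAB.trans hB0))
        have hbd : b = d := by simpa using (hB0.symm.trans (hBC.trans hC0))
        have haA : ∀ s : Fin 3, s ≠ 0 → a ∉ A s := fun s hs h =>
          hAp 0 s (fun e => hs e.symm) (by simp [hA0]) h
        have hbB : ∀ s : Fin 3, s ≠ 0 → b ∉ B s := fun s hs h =>
          hBp 0 s (fun e => hs e.symm) (by simp [hB0]) h
        have hdC : ∀ s : Fin 3, s ≠ 0 → d ∉ C s := fun s hs h =>
          hCp 0 s (fun e => hs e.symm) (by simp [hC0]) h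
        rcases hdisj with hD | hD | hD
        · refine ⟨s, t, 0, ?_⟩
          rw [tripleNodup]
          refine ⟨hAn s, hBn t, by rw [hC0]; simp, hD, ?_, ?_⟩
          · rw [hC0]
            have : d ∉ A s := by rw [← hbd, ← hab]; exact haA s hs
            simpa using this
          · rw [hC0]
            have : d ∉ B t := by rw [← hbd]; exact hbB t ht
            simpa using this
        · refine ⟨s, 0, t, ?_⟩
          rw [tripleNodup]
          refine ⟨hAn s, by rw [hB0]; simp, hCn t, ?_, hD, ?_⟩
          · rw [hB0]
            have : b ∉ A s := by rw [← hab]; exact haA s hs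
            simpa using this
          · rw [hB0]
            have : b ∉ C t := by rw [hbd]; exact hdC t ht
            simpa using this
        · refine ⟨0, s, t, ?_⟩
          rw [tripleNodup]
          refine ⟨by rw [hA0]; simp, hBn s, hCn t, ?_, ?_, hD⟩
          · rw [hA0]
            have : a ∉ B s := by rw [hab]; exact hbB s hs
            simpa using this
          · rw [hA0]
            have : a ∉ C t := by rw [hab, hbd]; exact hdC t ht
            simpa using this
      · exact case1 (not_and_or.mp hC1)


/-- A family of walks has a rainbow union if, collecting the edges of all of them, the edges
are pairwise distinct and receive pairwise distinct colors. -/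
def RainbowUnion {V : Type*} (c : Sym2 V → ℕ) (es : List (Sym2 V)) : Prop :=
  (es.map c).Nodup

/-- Criterion for picking one rainbow path out of each of three systems of three internally
disjoint super-rainbow paths `P₁ˣ, P₂ˣ, P₃ˣ` from `x ∈ {u,v,w}` to `D` (with `P₁ˣ` a single
edge) so that the union of the three chosen paths is rainbow: this is possible iff (C1) the
colors of the single edges `P₁ᵘ, P₁ᵛ, P₁ʷ` are not all equal, or (C2) two paths `P_sˣ, P_tʸ`
with `s,t ∈ {2,3}` from distinct systems have disjoint color sets. -/
theorem stmt19 {V : Type*} [DecidableEq V] (G : SimpleGraph V) (c : Sym2 V → ℕ)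
    (D : Set V) (u v w : V)
    (du dv dw : Fin 3 → V)
    (hdu : ∀ i, du i ∈ D) (hdv : ∀ i, dv i ∈ D) (hdw : ∀ i, dw i ∈ D)
    (Pu : ∀ i : Fin 3, G.Walk u (du i))
    (Pv : ∀ i : Fin 3, G.Walk v (dv i))
    (Pw : ∀ i : Fin 3, G.Walk w (dw i))
    (hpu : ∀ i, (Pu i).IsPath) (hpv : ∀ i, (Pv i).IsPath) (hpw : ∀ i, (Pw i).IsPath)
    -- the three paths from each vertex are internally disjoint: they meet only in that vertex
    (hiu : ∀ i j : Fin 3, i ≠ j →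
      {x | x ∈ (Pu i).support} ∩ {x | x ∈ (Pu j).support} = {u})
    (hiv : ∀ i j : Fin 3, i ≠ j →
      {x | x ∈ (Pv i).support} ∩ {x | x ∈ (Pv j).support} = {v})
    (hiw : ∀ i j : Fin 3, i ≠ j →
      {x | x ∈ (Pw i).support} ∩ {x | x ∈ (Pw j).support} = {w})
    -- each `P₁ˣ` consists of exactly one edge
    (hlu : (Pu 0).length = 1) (hlv : (Pv 0).length = 1) (hlw : (Pw 0).length = 1)
    -- each system `P₁ˣ ∪ P₂ˣ ∪ P₃ˣ` is rainbow
    (hru : RainbowUnion c ((Pu 0).edges ++ (Pu 1).edges ++ (Pu 2).edges))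
    (hrv : RainbowUnion c ((Pv 0).edges ++ (Pv 1).edges ++ (Pv 2).edges))
    (hrw : RainbowUnion c ((Pw 0).edges ++ (Pw 1).edges ++ (Pw 2).edges))
    -- the three systems are pairwise edge-disjoint
    (heuv : ∀ i j : Fin 3, List.Disjoint (Pu i).edges (Pv j).edges)
    (heuw : ∀ i j : Fin 3, List.Disjoint (Pu i).edges (Pw j).edges)
    (hevw : ∀ i j : Fin 3, List.Disjoint (Pv i).edges (Pw j).edges) :
    (∃ i j k : Fin 3,
        RainbowUnion c ((Pu i).edges ++ (Pv j).edges ++ (Pw k).edges)) ↔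
      (¬ ((Pu 0).edges.map c = (Pv 0).edges.map c ∧
          (Pv 0).edges.map c = (Pw 0).edges.map c)) ∨
      (∃ s t : Fin 3, s ≠ 0 ∧ t ≠ 0 ∧
        (List.Disjoint ((Pu s).edges.map c) ((Pv t).edges.map c) ∨
         List.Disjoint ((Pu s).edges.map c) ((Pw t).edges.map c) ∨
         List.Disjoint ((Pv s).edges.map c) ((Pw t).edges.map c))) := by
  obtain ⟨a, ha⟩ := List.length_eq_one_iff.mp
    (show ((Pu 0).edges.map c).length = 1 by simp [hlu])
  obtain ⟨b, hb⟩ := List.length_eq_one_iff.mp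
    (show ((Pv 0).edges.map c).length = 1 by simp [hlv])
  obtain ⟨d, hd⟩ := List.length_eq_one_iff.mp
    (show ((Pw 0).edges.map c).length = 1 by simp [hlw])
  have hA : ((Pu 0).edges.map c ++ (Pu 1).edges.map c ++ (Pu 2).edges.map c).Nodup := by
    simpa [RainbowUnion, List.map_append] using hru
  have hB : ((Pv 0).edges.map c ++ (Pv 1).edges.map c ++ (Pv 2).edges.map c).Nodup := by
    simpa [RainbowUnion, List.map_append] using hrv
  have hC : ((Pw 0).edges.map c ++ (Pw 1).edges.map c ++ (Pw 2).edges.map c).Nodup := by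
    simpa [RainbowUnion, List.map_append] using hrw
  have key := keyLemma (fun i => (Pu i).edges.map c) (fun i => (Pv i).edges.map c)
    (fun i => (Pw i).edges.map c) a b d ha hb hd hA hB hC
  simpa [RainbowUnion, List.map_append] using key
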